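/- For real r > 4^(-1/3), let t(r) = (√(12 r^3 - 3) - 3) / (6r). Then (t(r)^3 + 1)^(-2/3) · t'(r) = √(3 / (4 r^3 - 1)) for all r > 4^(-1/3) with r ≠ 1 where the expressions are defined. -/

import Mathlib

noncomputable def tOfR (r : ℝ) : ℝ := (Real.sqrt (12 * r ^ 3 - 3) - 3) / (6 * r)

theorem t_change_of_variables (r : ℝ)
    (hr : (4 : ℝ) ^ (-(1 : ℝ) / 3) < r) (hr1 : r ≠ 1) :
    (tOfR r ^ 3 + 1) ^ (-(2 : ℝ) / 3) * deriv tOfR r =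
      Real.sqrt (3 / (4 * r ^ 3 - 1)) := by
  have h40 : (0:ℝ) < (4 : ℝ) ^ (-(1 : ℝ) / 3) := Real.rpow_pos_of_pos (by norm_num) _
  have hr0 : 0 < r := h40.trans hr
  have hcube : (1:ℝ)/4 < r ^ 3 := by
    have h1 : ((4:ℝ) ^ (-(1 : ℝ) / 3)) ^ (3:ℕ) < r ^ (3:ℕ) :=
      pow_lt_pow_left₀ hr h40.le (by norm_num)
    have h2 : ((4:ℝ) ^ (-(1 : ℝ) / 3)) ^ (3:ℕ) = 1/4 := by
      rw [← Real.rpow_natCast ((4:ℝ) ^ (-(1 : ℝ) / 3)) 3, ← Real.rpow_mul (by norm_num)]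
      norm_num
    rw [h2] at h1
    exact h1
  have h12 : (0:ℝ) < 12 * r ^ 3 - 3 := by linarith
  have h4 : (0:ℝ) < 4 * r ^ 3 - 1 := by linarith
  set s := Real.sqrt (12 * r ^ 3 - 3) with hs_def
  have hs0 : 0 < s := Real.sqrt_pos.mpr h12
  have hs2 : s ^ 2 = 12 * r ^ 3 - 3 := Real.sq_sqrt h12.le
  -- derivative
  have hd2 : HasDerivAt (fun x : ℝ => Real.sqrt (12 * x ^ 3 - 3)) (36 * r ^ 2 / (2 * s)) r := by
    have hd1 : HasDerivAt (fun x : ℝ => 12 * x ^ 3 - 3) (36 * r ^ 2) r := by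
      have h := ((hasDerivAt_pow 3 r).const_mul (12:ℝ)).sub_const 3
      refine h.congr_deriv ?_
      norm_num; ring
    exact hd1.sqrt (ne_of_gt h12)
  have hg : HasDerivAt (fun x : ℝ => 6 * x) 6 r := by
    simpa using (hasDerivAt_id r).const_mul (6:ℝ)
  have hd : HasDerivAt tOfR
      ((36 * r ^ 2 / (2 * s) * (6 * r) - (s - 3) * 6) / (6 * r) ^ 2) r := by
    exact (hd2.sub_const 3).div hg (by positivity)
  have hderiv : deriv tOfR r = (2 * r ^ 3 + 1 + s) / (2 * r ^ 2 * s) := by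
    rw [hd.deriv]
    field_simp
    linear_combination (-2) * hs2
  -- value of t
  have ht : tOfR r = (s - 3) / (6 * r) := by rw [tOfR]
  have hB0 : (0:ℝ) < (2 * r ^ 3 + 1 + s) / (6 * r ^ 2) := by positivity
  have hA : tOfR r ^ 3 + 1 = (r ^ 3 * s + 2 * s + 9 * r ^ 3) / (18 * r ^ 3) := by
    rw [ht]
    field_simp
    linear_combination (18*(s-9)) * hs2
  have hA0 : (0:ℝ) < tOfR r ^ 3 + 1 := by rw [hA]; positivity
  -- key identity
  have hkey : (tOfR r ^ 3 + 1) ^ ((2:ℝ)/3) = (2 * r ^ 3 + 1 + s) / (6 * r ^ 2) := by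
    have hAB : (tOfR r ^ 3 + 1) ^ (2:ℕ) = ((2 * r ^ 3 + 1 + s) / (6 * r ^ 2)) ^ (3:ℕ) := by
      rw [hA]
      field_simp
      linear_combination (216*(r^3+2)^2 - 972*(2*r^3+1) - 324*s) * hs2
    have : (tOfR r ^ 3 + 1) ^ ((2:ℝ)/3)
        = ((tOfR r ^ 3 + 1) ^ (2:ℕ)) ^ ((1:ℝ)/3) := by
      rw [← Real.rpow_natCast (tOfR r ^ 3 + 1) 2, ← Real.rpow_mul hA0.le]
      norm_num
    rw [this, hAB, ← Real.rpow_natCast ((2 * r ^ 3 + 1 + s) / (6 * r ^ 2)) 3,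
      ← Real.rpow_mul hB0.le]
    norm_num
  -- finish
  have hneg : (tOfR r ^ 3 + 1) ^ (-(2:ℝ)/3) = ((2 * r ^ 3 + 1 + s) / (6 * r ^ 2))⁻¹ := by
    rw [show (-(2:ℝ)/3) = -((2:ℝ)/3) by ring, Real.rpow_neg hA0.le, hkey]
  rw [hneg, hderiv]
  have hrhs : Real.sqrt (3 / (4 * r ^ 3 - 1)) = 3 / s := by
    have : (3:ℝ) / (4 * r ^ 3 - 1) = (3 / s) ^ 2 := by
      rw [div_pow, hs2]
      field_simp
      rw [eq_div_iff (by linarith)]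
      ring
    rw [this, Real.sqrt_sq (by positivity)]
  rw [hrhs]
  field_simp
  ring
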